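/- For a finite simple graph Y, there is a bijection between the connected components of the update graph U(Y) and the acyclic orientations of Y. -/

import Mathlib

/-- The edge relation of the update graph `U(Y)`: two permutations are related iff they
differ by a transposition of two adjacent positions `i`, `i+1` whose entries are
not adjacent in `Y`. -/
def updRel {n : ℕ} (Y : SimpleGraph (Fin n)) (σ τ : Equiv.Perm (Fin n)) : Prop :=
  ∃ i j : Fin n, (j : ℕ) = (i : ℕ) + 1 ∧ τ = σ * Equiv.swap i j ∧ ¬ Y.Adj (σ i) (σ j)

/-- The orientation of `Y` induced by a permutation `σ`: each edge is directed from the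
vertex occurring earlier in `σ` to the one occurring later. -/
def inducedOrientation {n : ℕ} (Y : SimpleGraph (Fin n)) (σ : Equiv.Perm (Fin n)) :
    Fin n → Fin n → Prop :=
  fun u v => Y.Adj u v ∧ σ.symm u < σ.symm v

/-- `o` is an acyclic orientation of `Y`. -/
def IsAcyclicOrientation {n : ℕ} (Y : SimpleGraph (Fin n)) (o : Fin n → Fin n → Prop) : Prop :=
  (∀ u v, o u v → Y.Adj u v) ∧
  (∀ u v, Y.Adj u v → (o u v ↔ ¬ o v u)) ∧
  (∀ u, ¬ Relation.TransGen o u u)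

/-- The number of inversions of a permutation of `Fin n`. -/
def invCount {n : ℕ} (π : Equiv.Perm (Fin n)) : ℕ :=
  ((Finset.univ : Finset (Fin n × Fin n)).filter (fun p => p.1 < p.2 ∧ π p.2 < π p.1)).card

/-- A swap of adjacent positions `i`, `j = i+1` preserves the relative order of any pair
other than `{i, j}`. -/
lemma swap_lt_swap {n : ℕ} {i j a b : Fin n} (hij : (j : ℕ) = (i : ℕ) + 1)
    (h1 : ¬(a = i ∧ b = j)) (h2 : ¬(a = j ∧ b = i)) :
    (Equiv.swap i j a < Equiv.swap i j b ↔ a < b) := by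
  simp only [Equiv.swap_apply_def]
  split_ifs <;> simp only [Fin.lt_def, Fin.ext_iff, not_and] at * <;> omega

lemma invCount_eq_zero {n : ℕ} {π : Equiv.Perm (Fin n)} (h : invCount π = 0) : π = 1 := by
  have hno : ∀ a b : Fin n, a < b → ¬ π b < π a := by
    intro a b hab hba
    have hm : (a, b) ∈ (Finset.univ : Finset (Fin n × Fin n)).filter
        (fun p => p.1 < p.2 ∧ π p.2 < π p.1) := by
      simp [hab, hba]
    rw [Finset.card_eq_zero.1 h] at hm
    simp at hm
  have hmono : StrictMono π := by
    intro a b hab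
    rcases lt_trichotomy (π a) (π b) with h' | h' | h'
    · exact h'
    · exact absurd (π.injective h') (ne_of_lt hab)
    · exact absurd h' (hno a b hab)
  have hπ : ⇑π = id := (StrictMono.range_inj hmono strictMono_id).1
    (by rw [π.surjective.range_eq, Set.range_id])
  exact Equiv.ext fun x => congrFun hπ x

lemma exists_adj_inversion {n : ℕ} {π : Equiv.Perm (Fin n)} (h : invCount π ≠ 0) :
    ∃ i j : Fin n, (j : ℕ) = (i : ℕ) + 1 ∧ π j < π i := by
  by_contra hc
  push_neg at hc
  apply h
  have hmono : StrictMono π := by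
    match n, π with
    | 0, π => exact fun a => absurd a.2 (by omega)
    | (m+1), π =>
      rw [Fin.strictMono_iff_lt_succ]
      intro k
      have h1 : ((k.succ : Fin (m+1)) : ℕ) = ((k.castSucc : Fin (m+1)) : ℕ) + 1 := by simp
      have h2 := hc k.castSucc k.succ h1
      rcases h2.lt_or_eq with h3 | h3
      · exact h3
      · exact absurd (π.injective h3) (Fin.castSucc_lt_succ (i := k)).ne
  unfold invCount
  rw [Finset.card_eq_zero, Finset.filter_eq_empty_iff]
  rintro ⟨a, b⟩ -
  rintro ⟨hab, hba⟩
  exact absurd (hmono hab) (not_lt.2 hba.le)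

lemma invCount_swap {n : ℕ} (π : Equiv.Perm (Fin n)) (i j : Fin n)
    (hij : (j : ℕ) = (i : ℕ) + 1) (h : π j < π i) :
    invCount (π * Equiv.swap i j) + 1 = invCount π := by
  classical
  set s := Equiv.swap i j with hs
  have hiltj : i < j := by rw [Fin.lt_def]; omega
  have hmem : (i, j) ∈ (Finset.univ : Finset (Fin n × Fin n)).filter
      (fun p => p.1 < p.2 ∧ π p.2 < π p.1) := by simp [hiltj, h]
  have hcard : invCount (π * s) =
      (((Finset.univ : Finset (Fin n × Fin n)).filter
        (fun p => p.1 < p.2 ∧ π p.2 < π p.1)).erase (i, j)).card := by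
    apply Finset.card_bij' (fun p _ => (s p.1, s p.2)) (fun p _ => (s p.1, s p.2))
    · rintro ⟨a, b⟩ hp
      simp only [Finset.mem_filter, Finset.mem_univ, true_and] at hp; simp only [Equiv.Perm.mul_apply] at hp
      obtain ⟨hab, hinv⟩ := hp
      have hne1 : ¬(a = i ∧ b = j) := by
        rintro ⟨rfl, rfl⟩
        rw [hs, Equiv.swap_apply_left, Equiv.swap_apply_right] at hinv
        exact absurd h (not_lt.2 hinv.le)
      have hne2 : ¬(a = j ∧ b = i) := by
        rintro ⟨rfl, rfl⟩
        exact absurd hab (not_lt.2 hiltj.le)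
      have hlt : s a < s b := (swap_lt_swap hij hne1 hne2).2 hab
      rw [Finset.mem_erase]
      constructor
      · intro heq
        have h1 : s a = i := congrArg Prod.fst heq
        have h2 : s b = j := congrArg Prod.snd heq
        apply hne2
        constructor
        · have := congrArg s h1; rwa [hs, Equiv.swap_apply_self, Equiv.swap_apply_left] at this
        · have := congrArg s h2; rwa [hs, Equiv.swap_apply_self, Equiv.swap_apply_right] at this
      · simp only [Finset.mem_filter, Finset.mem_univ, true_and]
        exact ⟨hlt, hinv⟩
    · rintro ⟨a, b⟩ hp
      rw [Finset.mem_erase] at hp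
      obtain ⟨hne, hp⟩ := hp
      simp only [Finset.mem_filter, Finset.mem_univ, true_and] at hp
      obtain ⟨hab, hinv⟩ := hp
      have hne1 : ¬(a = i ∧ b = j) := by
        rintro ⟨rfl, rfl⟩; exact hne rfl
      have hne2 : ¬(a = j ∧ b = i) := by
        rintro ⟨rfl, rfl⟩; exact absurd hab (not_lt.2 hiltj.le)
      have hlt : s a < s b := (swap_lt_swap hij hne1 hne2).2 hab
      simp only [Finset.mem_filter, Finset.mem_univ, true_and]; simp only [Equiv.Perm.mul_apply]
      refine ⟨hlt, ?_⟩
      rw [hs, Equiv.swap_apply_self, Equiv.swap_apply_self]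
      exact hinv
    · rintro ⟨a, b⟩ _; simp [hs, Equiv.swap_apply_self]
    · rintro ⟨a, b⟩ _; simp [hs, Equiv.swap_apply_self]
  rw [hcard, Finset.card_erase_of_mem hmem]
  unfold invCount
  have : 0 < ((Finset.univ : Finset (Fin n × Fin n)).filter
      (fun p => p.1 < p.2 ∧ π p.2 < π p.1)).card := Finset.card_pos.2 ⟨_, hmem⟩
  omega

lemma inducedOrientation_acyclic {n : ℕ} (Y : SimpleGraph (Fin n)) (σ : Equiv.Perm (Fin n)) :
    IsAcyclicOrientation Y (inducedOrientation Y σ) := by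
  refine ⟨fun u v h => h.1, fun u v hadj => ?_, fun u h => ?_⟩
  · unfold inducedOrientation
    have hne : σ.symm u ≠ σ.symm v := fun h => Y.irrefl (by rwa [σ.symm.injective h] at hadj)
    constructor
    · rintro ⟨-, h⟩ ⟨-, h'⟩; exact absurd h' (not_lt.2 h.le)
    · intro h
      refine ⟨hadj, ?_⟩
      rcases lt_or_gt_of_ne hne with h' | h'
      · exact h'
      · exact absurd ⟨hadj.symm, h'⟩ h
  · have key : ∀ a b, Relation.TransGen (inducedOrientation Y σ) a b → σ.symm a < σ.symm b := by
      intro a b hab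
      induction hab with
      | single h => exact h.2
      | tail _ h ih => exact ih.trans h.2
    exact lt_irrefl _ (key u u h)

lemma updRel_orientation_eq {n : ℕ} (Y : SimpleGraph (Fin n)) {σ τ : Equiv.Perm (Fin n)}
    (h : updRel Y σ τ) : inducedOrientation Y σ = inducedOrientation Y τ := by
  obtain ⟨i, j, hij, hτ, hadj⟩ := h
  subst hτ
  funext u v
  unfold inducedOrientation
  have hsymm : ∀ x, (σ * Equiv.swap i j).symm x = Equiv.swap i j (σ.symm x) := by
    intro x
    rw [Equiv.Perm.mul_def, Equiv.symm_trans_apply, Equiv.symm_swap]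
  have hne1 : Y.Adj u v → ¬(σ.symm u = i ∧ σ.symm v = j) := by
    rintro ha ⟨h1, h2⟩
    apply hadj
    rw [← h1, ← h2, Equiv.apply_symm_apply, Equiv.apply_symm_apply]
    exact ha
  have hne2 : Y.Adj u v → ¬(σ.symm u = j ∧ σ.symm v = i) := by
    rintro ha ⟨h1, h2⟩
    apply hadj
    rw [← h1, ← h2, Equiv.apply_symm_apply, Equiv.apply_symm_apply]
    exact ha.symm
  apply propext
  constructor
  · rintro ⟨ha, hlt⟩
    refine ⟨ha, ?_⟩
    rw [hsymm u, hsymm v]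
    exact (swap_lt_swap hij (hne1 ha) (hne2 ha)).2 hlt
  · rintro ⟨ha, hlt⟩
    rw [hsymm u, hsymm v] at hlt
    exact ⟨ha, (swap_lt_swap hij (hne1 ha) (hne2 ha)).1 hlt⟩

lemma connect {n : ℕ} (Y : SimpleGraph (Fin n)) :
    ∀ (N : ℕ) (σ τ : Equiv.Perm (Fin n)), invCount (τ⁻¹ * σ) ≤ N →
      inducedOrientation Y σ = inducedOrientation Y τ →
      Relation.EqvGen (updRel Y) σ τ := by
  intro N
  induction N with
  | zero =>
    intro σ τ hN _
    rw [inv_mul_eq_one.1 (invCount_eq_zero (Nat.le_zero.1 hN))]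
    exact Relation.EqvGen.refl _
  | succ N ih =>
    intro σ τ hN heq
    by_cases h0 : invCount (τ⁻¹ * σ) = 0
    · rw [inv_mul_eq_one.1 (invCount_eq_zero h0)]
      exact Relation.EqvGen.refl _
    · obtain ⟨i, j, hij, hinv⟩ := exists_adj_inversion h0
      have hlt : i < j := by rw [Fin.lt_def]; omega
      have hadj : ¬ Y.Adj (σ i) (σ j) := by
        intro ha
        have h1 : inducedOrientation Y σ (σ i) (σ j) := ⟨ha, by simpa using hlt⟩
        rw [heq] at h1
        have h2 : τ.symm (σ j) < τ.symm (σ i) := by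
          simpa [Equiv.Perm.mul_apply] using hinv
        exact absurd h1.2 (not_lt.2 h2.le)
      have hrel : updRel Y σ (σ * Equiv.swap i j) := ⟨i, j, hij, rfl, hadj⟩
      have heq' : inducedOrientation Y (σ * Equiv.swap i j) = inducedOrientation Y τ :=
        (updRel_orientation_eq Y hrel).symm.trans heq
      have hcnt : invCount (τ⁻¹ * (σ * Equiv.swap i j)) ≤ N := by
        have hc := invCount_swap (τ⁻¹ * σ) i j hij hinv
        rw [mul_assoc] at hc
        omega
      exact Relation.EqvGen.trans _ _ _ (Relation.EqvGen.rel _ _ hrel) (ih _ _ hcnt heq')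

lemma exists_perm_of_acyclic {n : ℕ} (Y : SimpleGraph (Fin n)) (o : Fin n → Fin n → Prop)
    (ho : IsAcyclicOrientation Y o) : ∃ σ : Equiv.Perm (Fin n), inducedOrientation Y σ = o := by
  classical
  obtain ⟨ho1, ho2, ho3⟩ := ho
  set r : Fin n → Fin n → Prop := fun a b => a = b ∨ Relation.TransGen o a b with hr
  haveI : IsPartialOrder (Fin n) r := by
    refine { refl := fun a => Or.inl rfl, trans := ?_, antisymm := ?_ }
    · rintro a b c (rfl | hab) (rfl | hbc)
      · exact Or.inl rfl
      · exact Or.inr hbc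
      · exact Or.inr hab
      · exact Or.inr (hab.trans hbc)
    · rintro a b (rfl | hab) (h | hba)
      · rfl
      · rfl
      · exact h.symm
      · exact absurd (hab.trans hba) (ho3 a)
  obtain ⟨s, hs, hrs⟩ := extend_partialOrder r
  haveI hs1 : IsTrans (Fin n) s := hs.1.1.2
  haveI hs2 : IsAntisymm (Fin n) s := hs.1.2
  haveI hs3 : IsTotal (Fin n) s := hs.2
  haveI : DecidableRel s := Classical.decRel s
  set l : List (Fin n) := Finset.univ.sort s with hl
  have hnd : l.Nodup := Finset.sort_nodup (r := s) (s := _)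
  have hmem : ∀ a : Fin n, a ∈ l := fun a => (Finset.mem_sort (r := s)).2 (Finset.mem_univ a)
  have hlen : l.length = n := by
    rw [hl, Finset.length_sort, Finset.card_univ, Fintype.card_fin]
  set e : Fin l.length ≃ Fin n := hnd.getEquivOfForallMemList l hmem with he
  set σ : Equiv.Perm (Fin n) := (finCongr hlen.symm).trans e with hσ
  have hsorted : List.Pairwise s l := Finset.pairwise_sort (r := s) (s := _)
  have hget := List.pairwise_iff_get.1 hsorted
  have hmono : ∀ a b : Fin n, a < b → s (σ a) (σ b) := by
    intro a b hab
    exact hget ⟨a, by omega⟩ ⟨b, by omega⟩ (Fin.mk_lt_mk.2 hab)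
  have hkey : ∀ u v : Fin n, u ≠ v → s u v → σ.symm u < σ.symm v := by
    intro u v huv hsuv
    rcases lt_trichotomy (σ.symm u) (σ.symm v) with h | h | h
    · exact h
    · exact absurd (σ.symm.injective h) huv
    · have := hmono _ _ h
      rw [σ.apply_symm_apply, σ.apply_symm_apply] at this
      exact absurd (antisymm hsuv this) huv
  refine ⟨σ, ?_⟩
  funext u v
  apply propext
  constructor
  · rintro ⟨hadj, hlt⟩
    by_contra hno
    have hovu : o v u := not_not.1 (fun h => hno ((ho2 u v hadj).2 h))
    have hsvu : s v u := hrs _ _ (Or.inr (Relation.TransGen.single hovu))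
    have := hkey v u (Y.ne_of_adj hadj.symm) hsvu
    exact absurd hlt (not_lt.2 this.le)
  · intro houv
    have hadj := ho1 u v houv
    have hsuv : s u v := hrs _ _ (Or.inr (Relation.TransGen.single houv))
    exact ⟨hadj, hkey u v (Y.ne_of_adj hadj) hsuv⟩

lemma eqvGen_orientation_eq {n : ℕ} (Y : SimpleGraph (Fin n)) {σ τ : Equiv.Perm (Fin n)}
    (h : Relation.EqvGen (updRel Y) σ τ) :
    inducedOrientation Y σ = inducedOrientation Y τ := by
  induction h with
  | rel _ _ h => exact updRel_orientation_eq Y h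
  | refl _ => rfl
  | symm _ _ _ ih => exact ih.symm
  | trans _ _ _ _ _ ih1 ih2 => exact ih1.trans ih2

/-- The map from components of the update graph to acyclic orientations. -/
def orientationMap {n : ℕ} (Y : SimpleGraph (Fin n)) :
    Quot (Relation.EqvGen (updRel Y)) → {o : Fin n → Fin n → Prop // IsAcyclicOrientation Y o} :=
  Quot.lift (fun σ => ⟨inducedOrientation Y σ, inducedOrientation_acyclic Y σ⟩)
    (fun σ τ h => Subtype.ext (eqvGen_orientation_eq Y h))

theorem update_graph_components_biject_with_acyclic_orientations {n : ℕ}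
    (Y : SimpleGraph (Fin n)) :
    ∃ e : Quot (Relation.EqvGen (updRel Y)) ≃
        {o : Fin n → Fin n → Prop // IsAcyclicOrientation Y o},
      ∀ σ : Equiv.Perm (Fin n),
        (e (Quot.mk _ σ)).val = inducedOrientation Y σ := by
  have hbij : Function.Bijective (orientationMap Y) := by
    constructor
    · intro a b hab
      obtain ⟨σ, rfl⟩ := Quot.exists_rep a
      obtain ⟨τ, rfl⟩ := Quot.exists_rep b
      have heq : inducedOrientation Y σ = inducedOrientation Y τ := congrArg Subtype.val hab
      exact Quot.sound (connect Y (invCount (τ⁻¹ * σ)) σ τ le_rfl heq)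
    · rintro ⟨o, ho⟩
      obtain ⟨σ, hσ⟩ := exists_perm_of_acyclic Y o ho
      exact ⟨Quot.mk _ σ, Subtype.ext hσ⟩
  exact ⟨Equiv.ofBijective _ hbij, fun σ => rfl⟩
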